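/- For real numbers m, n ≥ 2 and variables Δ₁ ∈ [0,m], Δ₂ ∈ [0,n], the function f_d(Δ₁,Δ₂) = (1 - Δ₁/m - Δ₂/n) / √((m - Δ₁ + Δ₂)(n + Δ₁ - Δ₂)) has strictly negative partial derivative with respect to Δ₁ whenever 0 ≤ Δ₁ < m and 0 ≤ Δ₂ ≤ n and the denominator is positive. -/

import Mathlib

lemma key_ineq (m n d2 d1 : ℝ) (hm : 2 ≤ m) (hn : 2 ≤ n)
    (hd2 : 0 ≤ d2) (hd2n : d2 ≤ n) (hd1 : 0 ≤ d1) (hd1m : d1 < m)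
    (hB : 0 < n + d1 - d2) :
    0 < 2 * n * ((m - d1 + d2) * (n + d1 - d2))
        + (m * n - n * d1 - m * d2) * ((m - d1 + d2) - (n + d1 - d2)) := by
  have ha : 0 < m - d1 := by linarith
  have hb : 0 ≤ n - d2 := by linarith
  rcases lt_or_ge 0 (n - d2) with hb0 | hb0
  · nlinarith [mul_pos (mul_pos ha ha) hb0, mul_nonneg (mul_nonneg hd1 hd2) hd2,
      mul_nonneg (mul_nonneg hd1 hd1) hd2, mul_nonneg (mul_nonneg hb hd2) hd2,
      mul_nonneg (mul_nonneg hb hd1) hd2, mul_nonneg (mul_nonneg hb hb) hd2,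
      mul_nonneg (mul_nonneg ha.le hd1) hd2, mul_nonneg (mul_nonneg ha.le hb) hd2,
      mul_nonneg (mul_nonneg ha.le hb) hd1, mul_nonneg (mul_nonneg ha.le hb) hb]
  · have hnd : n = d2 := by linarith
    subst hnd
    have hc : 0 < d1 := by linarith
    have hd : (0:ℝ) < n := by linarith
    nlinarith [mul_pos (mul_pos hc hd) hd, mul_pos (mul_pos hc hc) hd,
      mul_pos (mul_pos ha hc) hd]

theorem stmt_0 (m n d2 : ℝ) (hm : 2 ≤ m) (hn : 2 ≤ n)
    (hd2 : 0 ≤ d2) (hd2n : d2 ≤ n) (d1 : ℝ) (hd1 : 0 ≤ d1) (hd1m : d1 < m)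
    (hpos : 0 < (m - d1 + d2) * (n + d1 - d2)) :
    deriv (fun t : ℝ => (1 - t / m - d2 / n) / Real.sqrt ((m - t + d2) * (n + t - d2))) d1
      < 0 := by
  have hm0 : (0:ℝ) < m := by linarith
  have hn0 : (0:ℝ) < n := by linarith
  have hA : 0 < m - d1 + d2 := by linarith
  have hB : 0 < n + d1 - d2 := by
    by_contra h
    push_neg at h
    nlinarith
  have hS : 0 < Real.sqrt ((m - d1 + d2) * (n + d1 - d2)) := Real.sqrt_pos.2 hpos
  have hSS : Real.sqrt ((m - d1 + d2) * (n + d1 - d2)) *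
      Real.sqrt ((m - d1 + d2) * (n + d1 - d2)) = (m - d1 + d2) * (n + d1 - d2) :=
    Real.mul_self_sqrt hpos.le
  have h1 : HasDerivAt (fun t : ℝ => m - t + d2) (-1) d1 := by
    simpa using (((hasDerivAt_id d1).const_sub m).add_const d2)
  have h2 : HasDerivAt (fun t : ℝ => n + t - d2) 1 d1 := by
    simpa using (((hasDerivAt_id d1).const_add n).sub_const d2)
  have hh : HasDerivAt (fun t : ℝ => (m - t + d2) * (n + t - d2))
      ((-1) * (n + d1 - d2) + (m - d1 + d2) * 1) d1 := h1.mul h2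
  have hs : HasDerivAt (fun t : ℝ => Real.sqrt ((m - t + d2) * (n + t - d2)))
      (1 / (2 * Real.sqrt ((m - d1 + d2) * (n + d1 - d2)))
        * ((-1) * (n + d1 - d2) + (m - d1 + d2) * 1)) d1 :=
    (Real.hasDerivAt_sqrt (ne_of_gt hpos)).comp d1 hh
  have hg : HasDerivAt (fun t : ℝ => 1 - t / m - d2 / n) (-(1/m)) d1 := by
    have : HasDerivAt (fun t : ℝ => t / m) (1/m) d1 := by
      simpa using (hasDerivAt_id d1).div_const m
    simpa using ((this.const_sub 1).sub_const (d2/n))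
  have hf := hg.div hs (ne_of_gt hS)
  rw [show (fun t : ℝ => (1 - t / m - d2 / n) / Real.sqrt ((m - t + d2) * (n + t - d2))) =
      ((fun t : ℝ => 1 - t / m - d2 / n) / fun t : ℝ => Real.sqrt ((m - t + d2) * (n + t - d2)))
      from rfl, hf.deriv]
  have key := key_ineq m n d2 d1 hm hn hd2 hd2n hd1 hd1m hB
  have main : ∀ S : ℝ, 0 < S → S * S = (m - d1 + d2) * (n + d1 - d2) →
      (-(1/m) * S - (1 - d1 / m - d2 / n)
        * (1 / (2 * S) * ((-1) * (n + d1 - d2) + (m - d1 + d2) * 1))) / S ^ 2 < 0 := by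
    intro S hSpos hSsq
    apply div_neg_of_neg_of_pos _ (by positivity)
    have hexp : (-(1/m) * S - (1 - d1 / m - d2 / n)
        * (1 / (2 * S) * ((-1) * (n + d1 - d2) + (m - d1 + d2) * 1))) * (2 * S * m * n)
        = -(2 * n * (S * S)
            + (m * n - n * d1 - m * d2) * ((m - d1 + d2) - (n + d1 - d2))) := by
      field_simp
      ring
    rw [hSsq] at hexp
    nlinarith [hexp, key, mul_pos (mul_pos (mul_pos two_pos hSpos) hm0) hn0]
  exact main _ hS hSS
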